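/- Fix ε with 0 ≤ ε ≤ 1/2 and for θ ∈ ℝ set a(θ) = 2√(ε(1−ε))·cos 2θ + (1−2ε)·sin 2θ and b(θ) = (1−2ε)·cos 2θ + 2√(ε(1−ε))·sin 2θ. Then the supremum over θ ∈ ℝ of the largest eigenvalue of the Hermitian 4×4 matrix 2a(θ)·(X⊗X) + b(θ)·(Z⊗I + I⊗Z) + Z⊗Z equals 1 + 2√(1 + 4(1−2ε)√(ε(1−ε))), and it is attained at θ = π/8. -/

import Mathlib

open Matrix Complex Kronecker

noncomputable section

def PauliX : Matrix (Fin 2) (Fin 2) ℂ := !![0, 1; 1, 0]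
def PauliY : Matrix (Fin 2) (Fin 2) ℂ := !![0, -Complex.I; Complex.I, 0]
def PauliZ : Matrix (Fin 2) (Fin 2) ℂ := !![1, 0; 0, -1]

/-- The 2×2 identity matrix. -/
def Id2 : Matrix (Fin 2) (Fin 2) ℂ := 1

/-- The largest eigenvalue of a (Hermitian) matrix, as the supremum of the
    Rayleigh quotient over unit vectors. -/
noncomputable def maxEig {m : Type*} [Fintype m] [DecidableEq m]
    (M : Matrix m m ℂ) : ℝ :=
  ⨆ v : {v : m → ℂ // ∑ i, Complex.normSq (v i) = 1},
    (star v.1 ⬝ᵥ (M *ᵥ v.1)).re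

/-- a(θ) = ⟨X̃₁⟩ = 2√(ε(1−ε))·cos 2θ + (1−2ε)·sin 2θ. -/
def aCoef (ε θ : ℝ) : ℝ :=
  2 * Real.sqrt (ε * (1 - ε)) * Real.cos (2 * θ) + (1 - 2 * ε) * Real.sin (2 * θ)

/-- b(θ) = ⟨Z̃₁⟩ = (1−2ε)·cos 2θ + 2√(ε(1−ε))·sin 2θ. -/
def bCoef (ε θ : ℝ) : ℝ :=
  (1 - 2 * ε) * Real.cos (2 * θ) + 2 * Real.sqrt (ε * (1 - ε)) * Real.sin (2 * θ)

/-- The reduced three-qubit stabilizer witness operator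
    2a(θ)·X⊗X + b(θ)·(Z⊗I + I⊗Z) + Z⊗Z. -/
def W3red (ε θ : ℝ) : Matrix (Fin 2 × Fin 2) (Fin 2 × Fin 2) ℂ :=
  ((2 * aCoef ε θ : ℝ) : ℂ) • (PauliX ⊗ₖ PauliX)
    + ((bCoef ε θ : ℝ) : ℂ) • (PauliZ ⊗ₖ Id2 + Id2 ⊗ₖ PauliZ)
    + PauliZ ⊗ₖ PauliZ

def Mab (a b : ℝ) : Matrix (Fin 2 × Fin 2) (Fin 2 × Fin 2) ℂ :=
  ((2 * a : ℝ) : ℂ) • (PauliX ⊗ₖ PauliX)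
    + ((b : ℝ) : ℂ) • (PauliZ ⊗ₖ Id2 + Id2 ⊗ₖ PauliZ)
    + PauliZ ⊗ₖ PauliZ

lemma rayleigh (a b : ℝ) (v : Fin 2 × Fin 2 → ℂ) :
    (star v ⬝ᵥ (Mab a b *ᵥ v)).re =
      (1 + 2*b) * Complex.normSq (v (0,0)) - Complex.normSq (v (0,1))
        - Complex.normSq (v (1,0)) + (1 - 2*b) * Complex.normSq (v (1,1))
        + 4*a*((starRingEnd ℂ (v (0,0)) * v (1,1)).re)
        + 4*a*((starRingEnd ℂ (v (0,1)) * v (1,0)).re) := by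
  simp [Mab, PauliX, PauliZ, Id2, dotProduct, Matrix.mulVec, Fintype.sum_prod_type,
    Fin.sum_univ_two, kroneckerMap_apply, Matrix.one_apply, Complex.normSq_apply,
    Complex.add_re, Complex.mul_re, Complex.mul_im, Pi.star_apply, Complex.ofReal_re,
    Complex.ofReal_im]
  ring

lemma cs_bound (r a b S D C K : ℝ) (hr : 0 ≤ r) (hr2 : a^2 + b^2 ≤ r^2)
    (hS : 0 ≤ S) (hSD : S^2 = D^2 + 4*C^2 + 4*K^2) :
    b*D + 2*a*C ≤ r*S := by
  have h : (b*D + 2*a*C)^2 ≤ (r*S)^2 := by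
    nlinarith [sq_nonneg (a*D - 2*b*C), sq_nonneg (a*K), sq_nonneg (b*K),
      mul_nonneg (by nlinarith : (0:ℝ) ≤ r^2 - a^2 - b^2) (sq_nonneg S)]
  nlinarith [h, mul_nonneg hr hS]

set_option maxHeartbeats 1000000 in
lemma maxEig_Mab (a b : ℝ) : maxEig (Mab a b) = 1 + 2 * Real.sqrt (a^2 + b^2) := by
  set r := Real.sqrt (a^2 + b^2) with hrdef
  have hr : 0 ≤ r := Real.sqrt_nonneg _
  have hr2 : r^2 = a^2 + b^2 := Real.sq_sqrt (by positivity)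
  have hub : ∀ v : {v : Fin 2 × Fin 2 → ℂ // ∑ i, Complex.normSq (v i) = 1},
      (star v.1 ⬝ᵥ (Mab a b *ᵥ v.1)).re ≤ 1 + 2*r := by
    rintro ⟨v, hv⟩
    rw [rayleigh]
    simp only [Fintype.sum_prod_type, Fin.sum_univ_two] at hv
    simp only [Complex.normSq_apply, Complex.mul_re, Complex.conj_re, Complex.conj_im] at hv ⊢
    set x0 := (v (0,0)).re; set y0 := (v (0,0)).im
    set x1 := (v (0,1)).re; set y1 := (v (0,1)).im
    set x2 := (v (1,0)).re; set y2 := (v (1,0)).im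
    set x3 := (v (1,1)).re; set y3 := (v (1,1)).im
    have h1 : b*((x0^2+y0^2) - (x3^2+y3^2)) + 2*a*(x0*x3 + y0*y3)
        ≤ r*((x0^2+y0^2) + (x3^2+y3^2)) :=
      cs_bound r a b _ _ _ (x0*y3 - x3*y0) hr hr2.ge (by positivity) (by ring)
    have h2 : (0:ℝ)*((x1^2+y1^2) - (x2^2+y2^2)) + 2*a*(x1*x2 + y1*y2)
        ≤ r*((x1^2+y1^2) + (x2^2+y2^2)) :=
      cs_bound r a 0 _ _ _ (x1*y2 - x2*y1) hr (by nlinarith) (by positivity) (by ring)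
    have hvr : r * (x0*x0 + y0*y0 + (x1*x1 + y1*y1) + (x2*x2 + y2*y2 + (x3*x3 + y3*y3))) = r := by
      rw [hv, mul_one]
    have hT : 0 ≤ r * (x1*x1 + y1*y1 + (x2*x2 + y2*y2)) := mul_nonneg hr (by nlinarith [mul_self_nonneg x1, mul_self_nonneg y1, mul_self_nonneg x2, mul_self_nonneg y2])
    linarith [h1, h2, hv, hvr, hT, sq_nonneg x1, sq_nonneg y1, sq_nonneg x2, sq_nonneg y2]
  have hbdd : BddAbove (Set.range fun v : {v : Fin 2 × Fin 2 → ℂ // ∑ i, Complex.normSq (v i) = 1} =>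
      (star v.1 ⬝ᵥ (Mab a b *ᵥ v.1)).re) := ⟨1 + 2*r, by rintro x ⟨v, rfl⟩; exact hub v⟩
  have hach : ∃ v : {v : Fin 2 × Fin 2 → ℂ // ∑ i, Complex.normSq (v i) = 1},
      (star v.1 ⬝ᵥ (Mab a b *ᵥ v.1)).re = 1 + 2*r := by
    rcases le_or_gt (r + b) 0 with h0 | h0
    · have hb : b = -r := by nlinarith
      have ha : a = 0 := by nlinarith
      refine ⟨⟨fun p => if p = (1,1) then 1 else 0, ?_⟩, ?_⟩
      · simp [Fintype.sum_prod_type, Fin.sum_univ_two, Prod.ext_iff]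
        decide
      · rw [rayleigh]
        simp [Prod.ext_iff, ha, hb]
    · have hrpos : 0 < r := by nlinarith
      set N := Real.sqrt (2*r*(r+b)) with hNdef
      have hN2 : N^2 = 2*r*(r+b) := Real.sq_sqrt (by positivity)
      have hNpos : 0 < N := Real.sqrt_pos.mpr (by positivity)
      have ha2 : a^2 = r^2 - b^2 := by nlinarith
      refine ⟨⟨fun p => if p = (0,0) then (((r+b)/N : ℝ) : ℂ) else
          if p = (1,1) then ((a/N : ℝ) : ℂ) else 0, ?_⟩, ?_⟩
      · simp only [Fintype.sum_prod_type, Fin.sum_univ_two]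
        norm_num [Prod.ext_iff, Complex.normSq_apply]
        field_simp
        nlinarith [hN2, ha2]
      · rw [rayleigh]
        norm_num [Prod.ext_iff, Complex.normSq_apply, Complex.mul_re]
        field_simp
        nlinarith [hN2, ha2, hNpos]
  obtain ⟨v0, hv0⟩ := hach
  haveI : Nonempty {v : Fin 2 × Fin 2 → ℂ // ∑ i, Complex.normSq (v i) = 1} := ⟨v0⟩
  refine le_antisymm (ciSup_le hub) ?_
  calc (1 : ℝ) + 2*r = _ := hv0.symm
    _ ≤ _ := le_ciSup hbdd v0

lemma ab_sq (ε θ : ℝ) (hε0 : 0 ≤ ε) (hε1 : ε ≤ 1/2) :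
    aCoef ε θ ^ 2 + bCoef ε θ ^ 2
      = 1 + 4 * (1 - 2 * ε) * Real.sqrt (ε * (1 - ε)) * Real.sin (4 * θ) := by
  have hs : Real.sqrt (ε * (1 - ε)) ^ 2 = ε * (1 - ε) :=
    Real.sq_sqrt (by nlinarith)
  have hpy : Real.cos (2*θ)^2 + Real.sin (2*θ)^2 = 1 := by
    rw [add_comm]; exact Real.sin_sq_add_cos_sq _
  have h4 : Real.sin (4*θ) = 2 * Real.sin (2*θ) * Real.cos (2*θ) := by
    rw [show (4:ℝ)*θ = 2*(2*θ) by ring, Real.sin_two_mul]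
  rw [aCoef, bCoef, h4]
  nlinarith [hs, hpy, sq_nonneg (Real.sin (2*θ)), sq_nonneg (Real.cos (2*θ))]

/-- the biseparable bound of the three-qubit stabilizer witness
    with imprecision only in one party. -/
theorem stab3_one_party_bound (ε : ℝ) (hε0 : 0 ≤ ε) (hε1 : ε ≤ 1 / 2) :
    (⨆ θ : ℝ, maxEig (W3red ε θ))
        = 1 + 2 * Real.sqrt (1 + 4 * (1 - 2 * ε) * Real.sqrt (ε * (1 - ε)))
      ∧ maxEig (W3red ε (Real.pi / 8))
        = 1 + 2 * Real.sqrt (1 + 4 * (1 - 2 * ε) * Real.sqrt (ε * (1 - ε))) := by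
  set c : ℝ := 4 * (1 - 2 * ε) * Real.sqrt (ε * (1 - ε)) with hcdef
  have hc : 0 ≤ c := by
    apply mul_nonneg (by linarith) (Real.sqrt_nonneg _)
  have key : ∀ θ : ℝ, maxEig (W3red ε θ) = 1 + 2 * Real.sqrt (1 + c * Real.sin (4 * θ)) := by
    intro θ
    have hW : W3red ε θ = Mab (aCoef ε θ) (bCoef ε θ) := rfl
    rw [hW, maxEig_Mab, ab_sq ε θ hε0 hε1]
  have hpi8 : maxEig (W3red ε (Real.pi / 8)) = 1 + 2 * Real.sqrt (1 + c) := by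
    rw [key, show (4:ℝ) * (Real.pi / 8) = Real.pi / 2 by ring, Real.sin_pi_div_two, mul_one]
  have hub : ∀ θ : ℝ, maxEig (W3red ε θ) ≤ 1 + 2 * Real.sqrt (1 + c) := by
    intro θ
    rw [key]
    have : Real.sqrt (1 + c * Real.sin (4 * θ)) ≤ Real.sqrt (1 + c) := by
      apply Real.sqrt_le_sqrt
      nlinarith [Real.sin_le_one (4 * θ), Real.neg_one_le_sin (4 * θ)]
    linarith
  constructor
  · refine le_antisymm (ciSup_le hub) ?_
    calc (1:ℝ) + 2 * Real.sqrt (1 + c) = maxEig (W3red ε (Real.pi / 8)) := hpi8.symm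
      _ ≤ _ := le_ciSup ⟨1 + 2 * Real.sqrt (1 + c), by rintro x ⟨θ, rfl⟩; exact hub θ⟩ (Real.pi / 8)
  · exact hpi8
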